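/- Let $S \subseteq \mathbb{F}_2^n$ be a submodule, let $g : \mathrm{Fin}\ k \to \mathbb{F}_2^n$ be vectors linearly independent modulo $S$, and let $\bar{g} : \mathrm{Fin}\ \bar{k} \to \mathbb{F}_2^n$ with $\bar{k} \le k$. Fix $t \le \bar{k}$ and suppose the nesting conditions hold: $\bar{g}_j = g_j$ for all $j < t$, and $\bar{g}_j \in \mathrm{span}\{g_s : t \le s < k\} + S$ for all $j$ with $t \le j < \bar{k}$. Then for every $\bar{u} \in \mathbb{F}_2^{\bar{k}}$, the unique $u \in \mathbb{F}_2^{k}$ satisfying $\sum_j \bar{u}_j \bar{g}_j - \sum_j u_j g_j \in S$ has $u_j = \bar{u}_j$ for all $j < t$. -/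

import Mathlib

/-- Lemma 2 (coordinate-preservation claim): if the first `t` of the vectors
`ḡ` coincide with the first `t` of the vectors `g`, and the remaining `ḡ_j`
lie in `span{g_s : t ≤ s} + S`, then the unique `u` with
`∑ ū_j ḡ_j - ∑ u_j g_j ∈ S` satisfies `u_j = ū_j` for all `j < t`. -/
theorem nested_index_preserves_prefix (n k kb t : ℕ)
    (htkb : t ≤ kb) (hkbk : kb ≤ k)
    (S : Submodule (ZMod 2) (Fin n → ZMod 2))
    (g : Fin k → (Fin n → ZMod 2)) (gb : Fin kb → (Fin n → ZMod 2))
    (hg : ∀ u : Fin k → ZMod 2, (∑ j, u j • g j) ∈ S → u = 0)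
    (hpre : ∀ j : ℕ, ∀ hj : j < t, gb ⟨j, by omega⟩ = g ⟨j, by omega⟩)
    (hrest : ∀ j : Fin kb, t ≤ (j : ℕ) →
      gb j ∈ Submodule.span (ZMod 2)
          {r : Fin n → ZMod 2 | ∃ s : Fin k, t ≤ (s : ℕ) ∧ r = g s} ⊔ S) :
    ∀ ub : Fin kb → ZMod 2, ∀ u : Fin k → ZMod 2,
      (∑ j, ub j • gb j) - (∑ j, u j • g j) ∈ S →
        ∀ j : ℕ, ∀ hj : j < t, u ⟨j, by omega⟩ = ub ⟨j, by omega⟩ := by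
  intro ub u hE j hj
  have hkb0 : 0 < kb := by omega
  set M := Submodule.span (ZMod 2)
      {r : Fin n → ZMod 2 | ∃ s : Fin k, t ≤ (s : ℕ) ∧ r = g s} with hM
  -- auxiliary: elements of M are combinations supported on indices ≥ t
  have aux : ∀ x ∈ M, ∃ c : Fin k → ZMod 2,
      (∀ s : Fin k, (s : ℕ) < t → c s = 0) ∧ x = ∑ s, c s • g s := by
    intro x hx
    induction hx using Submodule.span_induction with
    | mem r hr =>
      obtain ⟨s, hs, rfl⟩ := hr
      refine ⟨Pi.single s 1, ?_, ?_⟩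
      · intro s' hs'
        have : s' ≠ s := by rintro rfl; omega
        simp [Pi.single_apply, this]
      · simp [Pi.single_apply, Finset.sum_ite_eq', ite_smul]
    | zero => exact ⟨0, by simp, by simp⟩
    | add a b _ _ iha ihb =>
      obtain ⟨c1, h1, rfl⟩ := iha
      obtain ⟨c2, h2, rfl⟩ := ihb
      exact ⟨c1 + c2, fun s hs => by simp [h1 s hs, h2 s hs],
        by simp [add_smul, Finset.sum_add_distrib]⟩
    | smul a x _ ihx =>
      obtain ⟨c, hc, rfl⟩ := ihx
      exact ⟨a • c, fun s hs => by simp [hc s hs],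
        by simp [Finset.smul_sum, smul_smul]⟩
  -- split the ub sum
  have hsplit : (∑ j, ub j • gb j)
      = (∑ j ∈ Finset.univ.filter (fun j : Fin kb => (j : ℕ) < t), ub j • gb j)
      + (∑ j ∈ Finset.univ.filter (fun j : Fin kb => ¬ (j : ℕ) < t), ub j • gb j) := by
    rw [Finset.sum_filter_add_sum_filter_not]
  set w : Fin k → ZMod 2 := fun j => if h : (j : ℕ) < t then ub ⟨j, by omega⟩ else 0
    with hw
  have claim1 : (∑ j ∈ Finset.univ.filter (fun j : Fin kb => (j : ℕ) < t), ub j • gb j)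
      = ∑ s, w s • g s := by
    rw [← Finset.sum_filter_add_sum_filter_not Finset.univ (fun s : Fin k => (s : ℕ) < t)]
    have h2 : (∑ s ∈ Finset.univ.filter (fun s : Fin k => ¬ (s : ℕ) < t), w s • g s) = 0 := by
      apply Finset.sum_eq_zero
      intro s hs
      simp only [Finset.mem_filter] at hs
      simp [hw, hs.2]
    rw [h2, add_zero]
    refine Finset.sum_nbij' (fun j : Fin kb => Fin.castLE hkbk j)
      (fun s : Fin k => if h : (s : ℕ) < kb then ⟨(s : ℕ), h⟩ else ⟨0, hkb0⟩)
      ?_ ?_ ?_ ?_ ?_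
    · intro a ha
      simp only [Finset.mem_filter, Finset.mem_univ, true_and] at ha ⊢
      exact ha
    · intro a ha
      simp only [Finset.mem_filter, Finset.mem_univ, true_and] at ha ⊢
      rw [dif_pos (by omega : (a : ℕ) < kb)]
      exact ha
    · intro a ha
      simp only [Finset.mem_filter, Finset.mem_univ, true_and] at ha
      simp [Fin.castLE, Fin.ext_iff]
    · intro a ha
      simp only [Finset.mem_filter, Finset.mem_univ, true_and] at ha
      simp only [dif_pos (show (a : ℕ) < kb by omega)]
      simp [Fin.castLE, Fin.ext_iff]
    · intro a ha
      simp only [Finset.mem_filter, Finset.mem_univ, true_and] at ha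
      have h1 : gb a = g (Fin.castLE hkbk a) := by
        have := hpre (a : ℕ) ha
        convert this using 2
        exact Fin.ext (by simp)
      have h2 : w (Fin.castLE hkbk a) = ub a := by
        simp only [hw, Fin.castLE]
        rw [dif_pos (by simpa using ha)]
      rw [h1, h2]
  -- the tail sum lies in M ⊔ S
  have claim2 : (∑ j ∈ Finset.univ.filter (fun j : Fin kb => ¬ (j : ℕ) < t), ub j • gb j)
      ∈ M ⊔ S := by
    apply Submodule.sum_mem
    intro j hjm
    simp only [Finset.mem_filter, Finset.mem_univ, true_and, not_lt] at hjm
    exact Submodule.smul_mem _ _ (hrest j hjm)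
  obtain ⟨m, hm, s', hs', hms⟩ := Submodule.mem_sup.mp claim2
  obtain ⟨c, hc, rfl⟩ := aux m hm
  -- assemble
  have key : (∑ s, (w s + c s - u s) • g s) ∈ S := by
    have : (∑ s, (w s + c s - u s) • g s)
        = ((∑ j, ub j • gb j) - (∑ j, u j • g j)) - s' := by
      rw [hsplit, claim1, ← hms]
      simp only [add_smul, sub_smul, Finset.sum_add_distrib, Finset.sum_sub_distrib]
      abel
    rw [this]
    exact Submodule.sub_mem _ hE hs'
  have hz := hg _ key
  have hzj := congrFun hz ⟨j, by omega⟩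
  have hcz : c ⟨j, by omega⟩ = 0 := hc _ (by simpa using hj)
  have hwz : w ⟨j, by omega⟩ = ub ⟨j, by omega⟩ := by
    simp only [hw]
    rw [dif_pos (by simpa using hj)]
  simp only [Pi.zero_apply] at hzj
  rw [hcz, hwz] at hzj
  -- hzj : ub ⟨j,_⟩ + 0 - u ⟨j,_⟩ = 0
  linear_combination -hzj
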